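/- The key difference identity: with c_t(τ) = ∑_{l=0}^{M(τ)} C(M(τ),l)(-1)^l/(|τ|+l+t) and ∇v^t_s = v(s+t) − v(s+t−1), the payoff difference under splitting satisfies ψ_{T,k₁} + ψ_{T',k₂} − ψ_{T+T',k} = ∑_{t=0}^{T−1} ∑_{t₁=1}^{T'} ∑_{τ ∈ T(m_{[2:K]})} [(t₁+t) c_{t₁+t}(τ) − (t₁+t+1) c_{t₁+t+1}(τ)] ∇v^{t₁+t}_{|τ|}. -/

import Mathlib

open Finset

/-- Multi-choice Shapley value with linear weights (value function depends only on the
total data size `|τ|`). -/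
noncomputable def mcflShapley {K : ℕ} (m : Fin K → ℕ) (k : Fin K) (i : ℕ) (v : ℕ → ℝ) : ℝ :=
  ∑ j ∈ Finset.Icc 1 i,
    ∑ τ : ((a : Fin K) → Fin (m a + 1)),
      if (τ k : ℕ) = j ∧ (∃ a, (τ a : ℕ) ≠ 0) then
        (∑ S ∈ (Finset.univ.filter (fun a => (τ a : ℕ) ≠ m a ∧ a ≠ k)).powerset,
            (-1 : ℝ) ^ S.card * (j : ℝ) / ((∑ a, (τ a : ℕ) : ℕ) + S.card)) *
          (v (∑ a, (τ a : ℕ)) - v ((∑ a, (τ a : ℕ)) - 1))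
      else 0

/-- The coefficient `c_t(τ) = ∑_{l=0}^{M(τ)} C(M(τ),l)(-1)^l/(|τ|+l+t)` for a profile `τ`
of the other `K` agents with maxima `others`, where `M(τ) = #{a : τ_a ≠ others_a}`. -/
noncomputable def mcflCoeff {K : ℕ} (others : Fin K → ℕ)
    (τ : (a : Fin K) → Fin (others a + 1)) (t : ℕ) : ℝ :=
  ∑ l ∈ Finset.range ((Finset.univ.filter (fun a => (τ a : ℕ) ≠ others a)).card + 1),
    (((Finset.univ.filter (fun a => (τ a : ℕ) ≠ others a)).card.choose l : ℝ)) * (-1) ^ l /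
      ((∑ a, (τ a : ℕ) : ℕ) + l + t)

/-! ### Auxiliary scalar coefficient -/

noncomputable def cco (M s t : ℕ) : ℝ :=
  ∑ l ∈ Finset.range (M + 1), (M.choose l : ℝ) * (-1) ^ l / ((s : ℝ) + l + t)

lemma sum_Icc_one (f : ℕ → ℝ) (n : ℕ) : ∑ j ∈ Icc 1 n, f j = ∑ i ∈ range n, f (i + 1) := by
  induction n with
  | zero => simp
  | succ n ih => rw [Finset.sum_Icc_succ_top (by omega), ih, sum_range_succ]

lemma powerset_sum {α : Type*} [DecidableEq α] (A : Finset α) (M s t x : ℕ) (hM : A.card = M)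
    (hx : x = s + t) (j : ℝ) :
    ∑ S ∈ A.powerset, (-1 : ℝ) ^ S.card * j / ((x : ℝ) + S.card) = j * cco M s t := by
  subst hM hx
  rw [Finset.sum_powerset, cco, Finset.mul_sum]
  refine Finset.sum_congr rfl fun l hl => ?_
  have h1 : ∀ S ∈ Finset.powersetCard l A,
      (-1 : ℝ) ^ S.card * j / (((s + t : ℕ) : ℝ) + S.card)
      = (-1 : ℝ) ^ l * j / (((s + t : ℕ) : ℝ) + l) := fun S hS => by
    rw [(Finset.mem_powersetCard.mp hS).2]
  rw [Finset.sum_congr rfl h1, Finset.sum_const, Finset.card_powersetCard, nsmul_eq_mul]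
  push_cast
  ring

lemma cco_shift (M s x j : ℕ) : cco M (x + s) j = cco M s (j + x) := by
  rw [cco, cco]
  refine Finset.sum_congr rfl fun l _ => ?_
  push_cast
  ring_nf

lemma cco_succ (M s t : ℕ) : cco (M + 1) s t = cco M s t - cco M s (t + 1) := by
  have hz : (M.choose (M + 1) : ℝ) = 0 := by
    rw [Nat.choose_succ_self]; norm_num
  have e1 : cco (M + 1) s t = ∑ l ∈ range (M + 1),
      ((M.choose l : ℝ) + M.choose (l + 1)) * (-1) ^ (l + 1) / ((s : ℝ) + (l + 1) + t)
      + 1 / ((s : ℝ) + t) := by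
    rw [cco, Finset.sum_range_succ']
    congr 1
    · refine Finset.sum_congr rfl fun l _ => ?_
      have h : (M + 1).choose (l + 1) = M.choose l + M.choose (l + 1) := Nat.choose_succ_succ M l
      rw [h]; push_cast; ring
    · norm_num
  have e2 : cco M s (t + 1) = ∑ l ∈ range (M + 1),
      (M.choose l : ℝ) * (-1) ^ l / ((s : ℝ) + (l + 1) + t) := by
    rw [cco]
    refine Finset.sum_congr rfl fun l _ => ?_
    push_cast; ring_nf
  have e3 : cco M s t = ∑ l ∈ range (M + 1),
      (M.choose (l + 1) : ℝ) * (-1) ^ (l + 1) / ((s : ℝ) + (l + 1) + t) + 1 / ((s : ℝ) + t) := by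
    rw [cco, Finset.sum_range_succ']
    congr 1
    · rw [Finset.sum_range_succ, hz]
      norm_num
    · norm_num
  rw [e1, e2, e3]
  have e4 : ∑ l ∈ range (M + 1),
      ((M.choose l : ℝ) + M.choose (l + 1)) * (-1) ^ (l + 1) / ((s : ℝ) + (l + 1) + t)
      = ∑ l ∈ range (M + 1),
        ((M.choose (l + 1) : ℝ) * (-1) ^ (l + 1) / ((s : ℝ) + (l + 1) + t)
          - (M.choose l : ℝ) * (-1) ^ l / ((s : ℝ) + (l + 1) + t)) :=
    Finset.sum_congr rfl fun l _ => by push_cast; ring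
  rw [e4, Finset.sum_sub_distrib]
  ring

lemma cco_eps (M s N xv j : ℕ) :
    cco (M + (if xv = N then 0 else 1)) (xv + s) j
      = if xv = N then cco M s (j + xv) else cco M s (j + xv) - cco M s (j + xv + 1) := by
  by_cases h : xv = N
  · rw [if_pos h, if_pos h, add_zero, cco_shift]
  · rw [if_neg h, if_neg h, cco_succ, cco_shift, cco_shift,
      show j + 1 + xv = j + xv + 1 from by omega]

/-! ### Profile decomposition -/

variable {K : ℕ}

def consProfile (N : ℕ) (m : Fin K → ℕ) (x : Fin (N + 1)) (σ : (a : Fin K) → Fin (m a + 1)) :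
    (a : Fin (K + 1)) → Fin ((Fin.cons N m : Fin (K + 1) → ℕ) a + 1) :=
  Fin.cons (finCongr (by simp) x) (fun a => finCongr (by simp) (σ a))

@[simp] lemma consProfile_zero (N : ℕ) (m : Fin K → ℕ) (x : Fin (N + 1))
    (σ : (a : Fin K) → Fin (m a + 1)) : (consProfile N m x σ 0 : ℕ) = x := rfl

@[simp] lemma consProfile_succ (N : ℕ) (m : Fin K → ℕ) (x : Fin (N + 1))
    (σ : (a : Fin K) → Fin (m a + 1)) (b : Fin K) :
    (consProfile N m x σ b.succ : ℕ) = σ b := by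
  simp only [consProfile, Fin.cons_succ]
  rfl

def consProfileEquiv (N : ℕ) (m : Fin K → ℕ) :
    (Fin (N + 1) × ((a : Fin K) → Fin (m a + 1)))
      ≃ ((a : Fin (K + 1)) → Fin ((Fin.cons N m : Fin (K + 1) → ℕ) a + 1)) where
  toFun p := consProfile N m p.1 p.2
  invFun τ := (finCongr (by simp) (τ 0), fun a => finCongr (by simp) (τ a.succ))
  left_inv p := by
    ext
    · simp [consProfile]
    · simp [consProfile]
  right_inv τ := by
    funext a
    refine Fin.cases ?_ (fun b => ?_) a
    · apply Fin.val_injective; simp [consProfile]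
    · apply Fin.val_injective; simp [consProfile]

lemma pi_cons_sum (N : ℕ) (m : Fin K → ℕ)
    (f : ((a : Fin (K + 1)) → Fin ((Fin.cons N m : Fin (K + 1) → ℕ) a + 1)) → ℝ) :
    ∑ τ, f τ = ∑ x : Fin (N + 1), ∑ σ : (a : Fin K) → Fin (m a + 1), f (consProfile N m x σ) := by
  rw [← Equiv.sum_comp (consProfileEquiv N m), Fintype.sum_prod_type]
  rfl

def Mf (m : Fin K → ℕ) (σ : (a : Fin K) → Fin (m a + 1)) : ℕ :=
  (Finset.univ.filter fun a => (σ a : ℕ) ≠ m a).card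

def sf {m : Fin K → ℕ} (σ : (a : Fin K) → Fin (m a + 1)) : ℕ := ∑ a, (σ a : ℕ)

lemma sum_consProfile (N : ℕ) (m : Fin K → ℕ) (x : Fin (N + 1)) (σ : (a : Fin K) → Fin (m a + 1)) :
    (∑ a, (consProfile N m x σ a : ℕ)) = x + sf σ := by
  rw [Fin.sum_univ_succ, sf]
  simp

lemma sf_consProfile (N : ℕ) (m : Fin K → ℕ) (x : Fin (N + 1)) (σ : (a : Fin K) → Fin (m a + 1)) :
    sf (consProfile N m x σ) = x + sf σ := by
  rw [sf, sum_consProfile]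

lemma Mf_consProfile (N : ℕ) (m : Fin K → ℕ) (x : Fin (N + 1)) (σ : (a : Fin K) → Fin (m a + 1)) :
    Mf (Fin.cons N m : Fin (K + 1) → ℕ) (consProfile N m x σ)
      = Mf m σ + (if (x : ℕ) = N then 0 else 1) := by
  rw [Mf, Finset.card_filter, Fin.sum_univ_succ, Mf, Finset.card_filter]
  simp
  exact Nat.add_comm _ _

lemma card_cons_zero (N : ℕ) (m : Fin K → ℕ) (x : Fin (N + 1)) (σ : (a : Fin K) → Fin (m a + 1)) :
    (Finset.univ.filter fun a =>
        (consProfile N m x σ a : ℕ) ≠ (Fin.cons N m : Fin (K + 1) → ℕ) a ∧ a ≠ 0).card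
      = Mf m σ := by
  rw [Finset.card_filter, Fin.sum_univ_succ, Mf, Finset.card_filter]
  simp [Fin.succ_ne_zero]

lemma consProfile_one (N : ℕ) (m' : Fin (K + 1) → ℕ) (x : Fin (N + 1))
    (σ' : (a : Fin (K + 1)) → Fin (m' a + 1)) :
    (consProfile N m' x σ' 1 : ℕ) = σ' 0 := by
  rw [show (1 : Fin (K + 2)) = Fin.succ 0 from rfl, consProfile_succ]

lemma card_cons_one (m0 I : ℕ) (m : Fin K → ℕ) (x : Fin (m0 + 1)) (y : Fin (I + 1))
    (σ : (a : Fin K) → Fin (m a + 1)) :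
    (Finset.univ.filter fun a =>
        (consProfile m0 (Fin.cons I m) x (consProfile I m y σ) a : ℕ)
            ≠ (Fin.cons m0 (Fin.cons I m) : Fin (K + 2) → ℕ) a ∧ a ≠ 1).card
      = Mf m σ + (if (x : ℕ) = m0 then 0 else 1) := by
  rw [Finset.card_filter, Fin.sum_univ_succ, Fin.sum_univ_succ, Mf, Finset.card_filter]
  simp [Fin.succ_succ_ne_one, Fin.succ_zero_eq_one]
  exact Nat.add_comm _ _

/-! ### Reduction of the Shapley value -/

lemma shapley_zero (m : Fin K → ℕ) (I : ℕ) (v : ℕ → ℝ) :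
    mcflShapley (Fin.cons I m) 0 I v
      = ∑ j ∈ Icc 1 I, ∑ σ : (a : Fin K) → Fin (m a + 1),
          (j : ℝ) * cco (Mf m σ) (sf σ) j * (v (sf σ + j) - v (sf σ + j - 1)) := by
  rw [mcflShapley]
  refine Finset.sum_congr rfl fun j hj => ?_
  obtain ⟨hj1, hj2⟩ := Finset.mem_Icc.mp hj
  rw [pi_cons_sum, Finset.sum_comm]
  refine Finset.sum_congr rfl fun σ _ => ?_
  set xj : Fin (I + 1) := ⟨j, by omega⟩ with hxj
  rw [Finset.sum_eq_single_of_mem xj (Finset.mem_univ xj) (fun x _ hne => by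
    rw [if_neg]
    rintro ⟨h1, -⟩
    exact hne (Fin.ext (by simpa using h1)))]
  rw [if_pos ⟨by simp [hxj], ⟨0, by simp [hxj]; omega⟩⟩]
  rw [sum_consProfile]
  have hx : (xj : ℕ) + sf σ = sf σ + j := by simp [hxj]; omega
  rw [hx]
  rw [powerset_sum _ (Mf m σ) (sf σ) j _ (card_cons_zero I m xj σ) rfl ((j : ℕ) : ℝ)]

lemma shapley_one (m0 : ℕ) (m : Fin K → ℕ) (I : ℕ) (v : ℕ → ℝ) :
    mcflShapley (Fin.cons m0 (Fin.cons I m) : Fin (K + 2) → ℕ) 1 I v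
      = ∑ j ∈ Icc 1 I, ∑ x : Fin (m0 + 1), ∑ σ : (a : Fin K) → Fin (m a + 1),
          (j : ℝ) * cco (Mf m σ + (if (x : ℕ) = m0 then 0 else 1)) ((x : ℕ) + sf σ) j
            * (v ((x : ℕ) + sf σ + j) - v ((x : ℕ) + sf σ + j - 1)) := by
  rw [mcflShapley]
  refine Finset.sum_congr rfl fun j hj => ?_
  obtain ⟨hj1, hj2⟩ := Finset.mem_Icc.mp hj
  rw [pi_cons_sum]
  refine Finset.sum_congr rfl fun x _ => ?_
  rw [pi_cons_sum, Finset.sum_comm]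
  refine Finset.sum_congr rfl fun σ _ => ?_
  set yj : Fin (I + 1) := ⟨j, by omega⟩ with hyj
  rw [Finset.sum_eq_single_of_mem yj (Finset.mem_univ yj) (fun y _ hne => by
    rw [if_neg]
    rintro ⟨h1, -⟩
    rw [consProfile_one, consProfile_zero] at h1
    exact hne (Fin.ext (by simpa using h1)))]
  rw [if_pos ⟨by rw [consProfile_one, consProfile_zero],
    ⟨1, by rw [consProfile_one, consProfile_zero]; simp [hyj]; omega⟩⟩]
  have htot : ∑ a, (consProfile m0 (Fin.cons I m) x (consProfile I m yj σ) a : ℕ)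
      = ((x : ℕ) + sf σ) + j := by
    rw [sum_consProfile, sf_consProfile]
    have : (yj : ℕ) = j := rfl
    omega
  rw [htot]
  rw [powerset_sum _ (Mf m σ + (if (x : ℕ) = m0 then 0 else 1)) ((x : ℕ) + sf σ) j _
    (card_cons_one m0 I m x yj σ) rfl ((j : ℕ) : ℝ)]

/-! ### The scalar identity -/

lemma ifsplit (n jj : ℕ) (c : ℝ) (G H : ℕ → ℝ) :
    ∑ x ∈ range (n + 1), c * (if x = n then G (jj + x) else G (jj + x) - H (jj + x))
      = ∑ x ∈ range (n + 1), c * G (jj + x) - ∑ x ∈ range n, c * H (jj + x) := by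
  rw [sum_range_succ, sum_range_succ (fun x => c * G (jj + x)), if_pos rfl]
  have h1 : ∀ x ∈ range n, c * (if x = n then G (jj + x) else G (jj + x) - H (jj + x))
      = c * G (jj + x) - c * H (jj + x) := fun x hx => by
    rw [if_neg (Nat.ne_of_lt (mem_range.mp hx))]; ring
  rw [Finset.sum_congr rfl h1, Finset.sum_sub_distrib]
  ring

lemma keyH (T T' : ℕ) (H : ℕ → ℝ) :
    ∑ j ∈ Icc 1 T, ∑ x ∈ range T', (j : ℝ) * H (j + x)
      + ∑ j ∈ Icc 1 T', ∑ x ∈ range T, (j : ℝ) * H (j + x)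
    = ∑ t ∈ range T, ∑ t₁ ∈ Icc 1 T', ((t₁ + t + 1 : ℕ) : ℝ) * H (t₁ + t) := by
  have h2 : ∑ j ∈ Icc 1 T', ∑ x ∈ range T, (j : ℝ) * H (j + x)
      = ∑ x ∈ range T, ∑ i ∈ range T', ((i + 1 : ℕ) : ℝ) * H ((i + 1) + x) := by
    rw [sum_Icc_one (fun j => ∑ x ∈ range T, (j : ℝ) * H (j + x))]
    exact Finset.sum_comm
  rw [h2, sum_Icc_one (fun j => ∑ x ∈ range T', (j : ℝ) * H (j + x)), ← Finset.sum_add_distrib]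
  refine Finset.sum_congr rfl fun t _ => ?_
  rw [sum_Icc_one (fun t₁ => ((t₁ + t + 1 : ℕ) : ℝ) * H (t₁ + t)), ← Finset.sum_add_distrib]
  refine Finset.sum_congr rfl fun i _ => ?_
  rw [show t + 1 + i = i + 1 + t from by omega]
  push_cast
  ring

lemma keystep (T T' : ℕ) (G : ℕ → ℝ) :
    ∑ x ∈ range (T' + 1), ((T + 1 : ℕ) : ℝ) * G (T + 1 + x)
      + ∑ j ∈ Icc 1 T', (j : ℝ) * G (j + (T + 1))
      - ((T + 1 + T' : ℕ) : ℝ) * G (T + 1 + T')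
    = ∑ t₁ ∈ Icc 1 T', ((t₁ + T : ℕ) : ℝ) * G (t₁ + T) := by
  set f : ℕ → ℝ := fun u => ((T + 1 + u : ℕ) : ℝ) * G (T + 1 + u) with hf
  have h5 : ∑ x ∈ range (T' + 1), f x = ∑ x ∈ range T', f (x + 1) + f 0 := sum_range_succ' f T'
  have h6 : ∑ x ∈ range (T' + 1), f x = ∑ x ∈ range T', f x + f T' := sum_range_succ f T'
  have e1 : ∑ x ∈ range (T' + 1), ((T + 1 : ℕ) : ℝ) * G (T + 1 + x)
      = ∑ x ∈ range T', ((T + 1 : ℕ) : ℝ) * G (T + 1 + (x + 1)) + ((T + 1 : ℕ) : ℝ) * G (T + 1 + 0) :=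
    sum_range_succ' _ T'
  have e2 : ∑ j ∈ Icc 1 T', (j : ℝ) * G (j + (T + 1))
      = ∑ i ∈ range T', ((i + 1 : ℕ) : ℝ) * G ((i + 1) + (T + 1)) := by
    rw [sum_Icc_one (fun j => (j : ℝ) * G (j + (T + 1)))]
  have e3 : ∑ t₁ ∈ Icc 1 T', ((t₁ + T : ℕ) : ℝ) * G (t₁ + T) = ∑ i ∈ range T', f i := by
    rw [sum_Icc_one (fun t₁ => ((t₁ + T : ℕ) : ℝ) * G (t₁ + T))]
    refine Finset.sum_congr rfl fun i _ => ?_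
    simp only [hf]
    rw [show i + 1 + T = T + 1 + i from by omega]
  have e4 : ∑ x ∈ range T', ((T + 1 : ℕ) : ℝ) * G (T + 1 + (x + 1))
      + ∑ i ∈ range T', ((i + 1 : ℕ) : ℝ) * G ((i + 1) + (T + 1)) = ∑ x ∈ range T', f (x + 1) := by
    rw [← Finset.sum_add_distrib]
    refine Finset.sum_congr rfl fun x _ => ?_
    simp only [hf]
    rw [show x + 1 + (T + 1) = T + 1 + (x + 1) from by omega]
    push_cast
    ring_nf
  have e5 : ((T + 1 : ℕ) : ℝ) * G (T + 1 + 0) = f 0 := by simp only [hf]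
  have e6 : ((T + 1 + T' : ℕ) : ℝ) * G (T + 1 + T') = f T' := by simp only [hf]
  rw [e1, e2, e3, e6]
  linarith [h5, h6, e4, e5]

lemma keyG (T T' : ℕ) (G : ℕ → ℝ) :
    ∑ j ∈ Icc 1 T, ∑ x ∈ range (T' + 1), (j : ℝ) * G (j + x)
      + ∑ j ∈ Icc 1 T', ∑ x ∈ range (T + 1), (j : ℝ) * G (j + x)
      - ∑ j ∈ Icc 1 (T + T'), (j : ℝ) * G j
    = ∑ t ∈ range T, ∑ t₁ ∈ Icc 1 T', ((t₁ + t : ℕ) : ℝ) * G (t₁ + t) := by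
  induction T with
  | zero => simp
  | succ T ih =>
    rw [Finset.sum_Icc_succ_top (show 1 ≤ T + 1 by omega)
      (fun j => ∑ x ∈ range (T' + 1), (j : ℝ) * G (j + x))]
    have h2 : ∑ j ∈ Icc 1 T', ∑ x ∈ range (T + 1 + 1), (j : ℝ) * G (j + x)
        = ∑ j ∈ Icc 1 T', ∑ x ∈ range (T + 1), (j : ℝ) * G (j + x)
          + ∑ j ∈ Icc 1 T', (j : ℝ) * G (j + (T + 1)) := by
      rw [← Finset.sum_add_distrib]
      exact Finset.sum_congr rfl fun j _ => sum_range_succ _ _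
    have h3 : ∑ j ∈ Icc 1 (T + 1 + T'), (j : ℝ) * G j
        = ∑ j ∈ Icc 1 (T + T'), (j : ℝ) * G j + ((T + 1 + T' : ℕ) : ℝ) * G (T + 1 + T') := by
      rw [show T + 1 + T' = (T + T') + 1 from by omega,
        Finset.sum_Icc_succ_top (by omega) (fun j => (j : ℝ) * G j)]
    rw [h2, h3, sum_range_succ (fun t => ∑ t₁ ∈ Icc 1 T', ((t₁ + t : ℕ) : ℝ) * G (t₁ + t)) T]
    have := keystep T T' G
    linarith

lemma key (T T' : ℕ) (G H : ℕ → ℝ) :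
    (∑ j ∈ Icc 1 T, ∑ x ∈ range (T' + 1),
        (j : ℝ) * (if x = T' then G (j + x) else G (j + x) - H (j + x)))
      + (∑ j ∈ Icc 1 T', ∑ x ∈ range (T + 1),
          (j : ℝ) * (if x = T then G (j + x) else G (j + x) - H (j + x)))
      - ∑ j ∈ Icc 1 (T + T'), (j : ℝ) * G j
    = ∑ t ∈ range T, ∑ t₁ ∈ Icc 1 T',
        (((t₁ + t : ℕ) : ℝ) * G (t₁ + t) - ((t₁ + t + 1 : ℕ) : ℝ) * H (t₁ + t)) := by
  have s1 : ∑ j ∈ Icc 1 T, ∑ x ∈ range (T' + 1),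
        (j : ℝ) * (if x = T' then G (j + x) else G (j + x) - H (j + x))
      = ∑ j ∈ Icc 1 T, ∑ x ∈ range (T' + 1), (j : ℝ) * G (j + x)
        - ∑ j ∈ Icc 1 T, ∑ x ∈ range T', (j : ℝ) * H (j + x) := by
    rw [← Finset.sum_sub_distrib]
    exact Finset.sum_congr rfl fun j _ => ifsplit T' j (j : ℝ) G H
  have s2 : ∑ j ∈ Icc 1 T', ∑ x ∈ range (T + 1),
        (j : ℝ) * (if x = T then G (j + x) else G (j + x) - H (j + x))
      = ∑ j ∈ Icc 1 T', ∑ x ∈ range (T + 1), (j : ℝ) * G (j + x)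
        - ∑ j ∈ Icc 1 T', ∑ x ∈ range T, (j : ℝ) * H (j + x) := by
    rw [← Finset.sum_sub_distrib]
    exact Finset.sum_congr rfl fun j _ => ifsplit T j (j : ℝ) G H
  have s3 : ∑ t ∈ range T, ∑ t₁ ∈ Icc 1 T',
        (((t₁ + t : ℕ) : ℝ) * G (t₁ + t) - ((t₁ + t + 1 : ℕ) : ℝ) * H (t₁ + t))
      = (∑ t ∈ range T, ∑ t₁ ∈ Icc 1 T', ((t₁ + t : ℕ) : ℝ) * G (t₁ + t))
        - ∑ t ∈ range T, ∑ t₁ ∈ Icc 1 T', ((t₁ + t + 1 : ℕ) : ℝ) * H (t₁ + t) := by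
    rw [← Finset.sum_sub_distrib]
    exact Finset.sum_congr rfl fun t _ => Finset.sum_sub_distrib _ _
  rw [s1, s2, s3]
  have hG := keyG T T' G
  have hH := keyH T T' H
  linarith

/-! ### Final assembly -/

noncomputable def Gv (others : Fin K → ℕ) (v : ℕ → ℝ)
    (σ : (a : Fin K) → Fin (others a + 1)) (u : ℕ) : ℝ :=
  cco (Mf others σ) (sf σ) u * (v (sf σ + u) - v (sf σ + u - 1))

noncomputable def Hv (others : Fin K → ℕ) (v : ℕ → ℝ)
    (σ : (a : Fin K) → Fin (others a + 1)) (u : ℕ) : ℝ :=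
  cco (Mf others σ) (sf σ) (u + 1) * (v (sf σ + u) - v (sf σ + u - 1))

lemma mcflCoeff_eq (others : Fin K → ℕ) (τ : (a : Fin K) → Fin (others a + 1)) (t : ℕ) :
    mcflCoeff others τ t = cco (Mf others τ) (sf τ) t := rfl

theorem shapley_split_difference_identity (K : ℕ) (others : Fin K → ℕ) (T T' : ℕ)
    (hT : 1 ≤ T) (hT' : 1 ≤ T') (v : ℕ → ℝ) :
    mcflShapley (Fin.cons T (Fin.cons T' others)) 0 T v
      + mcflShapley (Fin.cons T (Fin.cons T' others)) 1 T' v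
      - mcflShapley (Fin.cons (T + T') others) 0 (T + T') v
    = ∑ t ∈ Finset.range T, ∑ t₁ ∈ Finset.Icc 1 T',
        ∑ τ : ((a : Fin K) → Fin (others a + 1)),
          (((t₁ + t : ℕ) : ℝ) * mcflCoeff others τ (t₁ + t)
              - ((t₁ + t + 1 : ℕ) : ℝ) * mcflCoeff others τ (t₁ + t + 1)) *
            (v ((∑ a, (τ a : ℕ)) + (t₁ + t)) - v ((∑ a, (τ a : ℕ)) + (t₁ + t) - 1)) := by
  have e1 : mcflShapley (Fin.cons T (Fin.cons T' others)) 0 T v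
      = ∑ σ : (a : Fin K) → Fin (others a + 1), ∑ j ∈ Icc 1 T, ∑ x ∈ range (T' + 1),
          (j : ℝ) * (if x = T' then Gv others v σ (j + x)
            else Gv others v σ (j + x) - Hv others v σ (j + x)) := by
    rw [shapley_zero (Fin.cons T' others) T v]
    refine Eq.trans (Finset.sum_congr rfl fun j hj => ?_) Finset.sum_comm
    rw [pi_cons_sum]
    have hpt : ∀ (x : Fin (T' + 1)) (σ : (a : Fin K) → Fin (others a + 1)),
        (j : ℝ) * cco (Mf (Fin.cons T' others : Fin (K + 1) → ℕ) (consProfile T' others x σ))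
            (sf (consProfile T' others x σ)) j
          * (v (sf (consProfile T' others x σ) + j) - v (sf (consProfile T' others x σ) + j - 1))
        = (j : ℝ) * (if (x : ℕ) = T' then Gv others v σ (j + (x : ℕ))
            else Gv others v σ (j + (x : ℕ)) - Hv others v σ (j + (x : ℕ))) := by
      intro x σ
      simp only [Gv, Hv]
      rw [Mf_consProfile, sf_consProfile, cco_eps,
        show (x : ℕ) + sf σ + j = sf σ + (j + (x : ℕ)) from by omega]
      split_ifs <;> ring
    rw [Finset.sum_congr rfl (fun x _ => Finset.sum_congr rfl (fun σ _ => hpt x σ))]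
    exact (Fin.sum_univ_eq_sum_range (fun n => ∑ σ : (a : Fin K) → Fin (others a + 1),
      (j : ℝ) * (if n = T' then Gv others v σ (j + n)
        else Gv others v σ (j + n) - Hv others v σ (j + n))) (T' + 1)).trans Finset.sum_comm
  have e2 : mcflShapley (Fin.cons T (Fin.cons T' others)) 1 T' v
      = ∑ σ : (a : Fin K) → Fin (others a + 1), ∑ j ∈ Icc 1 T', ∑ x ∈ range (T + 1),
          (j : ℝ) * (if x = T then Gv others v σ (j + x)
            else Gv others v σ (j + x) - Hv others v σ (j + x)) := by
    rw [shapley_one T others T' v]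
    refine Eq.trans (Finset.sum_congr rfl fun j hj => ?_) Finset.sum_comm
    have hpt : ∀ (x : Fin (T + 1)) (σ : (a : Fin K) → Fin (others a + 1)),
        (j : ℝ) * cco (Mf others σ + (if (x : ℕ) = T then 0 else 1)) ((x : ℕ) + sf σ) j
          * (v ((x : ℕ) + sf σ + j) - v ((x : ℕ) + sf σ + j - 1))
        = (j : ℝ) * (if (x : ℕ) = T then Gv others v σ (j + (x : ℕ))
            else Gv others v σ (j + (x : ℕ)) - Hv others v σ (j + (x : ℕ))) := by
      intro x σ
      simp only [Gv, Hv]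
      rw [cco_eps, show (x : ℕ) + sf σ + j = sf σ + (j + (x : ℕ)) from by omega]
      split_ifs <;> ring
    rw [Finset.sum_congr rfl (fun x _ => Finset.sum_congr rfl (fun σ _ => hpt x σ))]
    exact (Fin.sum_univ_eq_sum_range (fun n => ∑ σ : (a : Fin K) → Fin (others a + 1),
      (j : ℝ) * (if n = T then Gv others v σ (j + n)
        else Gv others v σ (j + n) - Hv others v σ (j + n))) (T + 1)).trans Finset.sum_comm
  have e3 : mcflShapley (Fin.cons (T + T') others) 0 (T + T') v
      = ∑ σ : (a : Fin K) → Fin (others a + 1), ∑ j ∈ Icc 1 (T + T'),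
          (j : ℝ) * Gv others v σ j := by
    rw [shapley_zero others (T + T') v, Finset.sum_comm]
    exact Finset.sum_congr rfl fun σ _ => Finset.sum_congr rfl fun j _ => by
      simp only [Gv]; ring
  have e4 : ∑ t ∈ Finset.range T, ∑ t₁ ∈ Finset.Icc 1 T',
        ∑ τ : ((a : Fin K) → Fin (others a + 1)),
          (((t₁ + t : ℕ) : ℝ) * mcflCoeff others τ (t₁ + t)
              - ((t₁ + t + 1 : ℕ) : ℝ) * mcflCoeff others τ (t₁ + t + 1)) *
            (v ((∑ a, (τ a : ℕ)) + (t₁ + t)) - v ((∑ a, (τ a : ℕ)) + (t₁ + t) - 1))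
      = ∑ σ : (a : Fin K) → Fin (others a + 1), ∑ t ∈ range T, ∑ t₁ ∈ Icc 1 T',
          (((t₁ + t : ℕ) : ℝ) * Gv others v σ (t₁ + t)
            - ((t₁ + t + 1 : ℕ) : ℝ) * Hv others v σ (t₁ + t)) := by
    refine Eq.trans (Finset.sum_congr rfl fun t _ => Finset.sum_comm) ?_
    refine Eq.trans Finset.sum_comm ?_
    refine Finset.sum_congr rfl fun σ _ => Finset.sum_congr rfl fun t _ =>
      Finset.sum_congr rfl fun t₁ _ => ?_
    simp only [Gv, Hv, mcflCoeff_eq, sf]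
    ring
  rw [e1, e2, e3, e4, ← Finset.sum_add_distrib, ← Finset.sum_sub_distrib]
  exact Finset.sum_congr rfl fun σ _ => key T T' (Gv others v σ) (Hv others v σ)
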